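/- Let D be a finite set of positive integers, q : D → ℝ with q_k > 0 for all k ∈ D and Σ_{k∈D} q_k = 1, and let c_k > 0 for each k ∈ D. For each k ∈ D let w_k : [0,1] → [0,1] satisfy w_k(1) = 1 and lim_{s→0+} (1 − w_k(1 − s))/s = ∞ (unbounded steepness of the probability weighting function near 1). Let δ* be a degree-based equilibrium of the game with perceived costs J^w_k(δ) = w_k(x_k(δ)) + c_k δ_k on strategy sets Δ_k = [0, 1/c_k]. Then δ*_k > 0 for every k ∈ D, irrespective of the values of the costs c_k. -/

import Mathlib

open Classical in
/-- The endemic-state neighbor infection probability `v(δ)`: a solution `v ∈ (0,1]` of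
the consistency equation `Σ_{i∈D} i q_i / (δ_i + i v) = 1` if one exists (it is then
unique for nonnegative curing rates), and `0` otherwise. -/
noncomputable def vstar (D : Finset ℕ) (q : ℕ → ℝ) (δ : ℕ → ℝ) : ℝ :=
  if h : ∃ v : ℝ, v ∈ Set.Ioc (0 : ℝ) 1 ∧
      ∑ i ∈ D, (i : ℝ) * q i / (δ i + (i : ℝ) * v) = 1 then h.choose else 0

/-- The steady-state infection probability of degree-`k` nodes:
`x_k(δ) = k v(δ) / (δ_k + k v(δ))` if `v(δ) > 0`, and `0` otherwise. -/
noncomputable def xinf (D : Finset ℕ) (q : ℕ → ℝ) (δ : ℕ → ℝ) (k : ℕ) : ℝ :=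
  if 0 < vstar D q δ then (k : ℝ) * vstar D q δ / (δ k + (k : ℝ) * vstar D q δ) else 0

open Classical in
lemma vstar_spec {D : Finset ℕ} {q δ : ℕ → ℝ}
    (h : ∃ v : ℝ, v ∈ Set.Ioc (0:ℝ) 1 ∧
      ∑ i ∈ D, (i:ℝ) * q i / (δ i + (i:ℝ) * v) = 1) :
    vstar D q δ ∈ Set.Ioc (0:ℝ) 1 ∧
      ∑ i ∈ D, (i:ℝ) * q i / (δ i + (i:ℝ) * vstar D q δ) = 1 := by
  rw [vstar, dif_pos h]
  exact h.choose_spec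

lemma exists_vsol (D : Finset ℕ) (hD : ∀ k ∈ D, 0 < k)
    (q : ℕ → ℝ) (δ : ℕ → ℝ) (hδ : ∀ k ∈ D, 0 ≤ δ k)
    (v₀ : ℝ) (hv₀ : 0 < v₀) (hv₁ : v₀ ≤ 1)
    (hlo : 1 ≤ ∑ i ∈ D, (i:ℝ) * q i / (δ i + (i:ℝ) * v₀))
    (hhi : ∑ i ∈ D, (i:ℝ) * q i / (δ i + (i:ℝ) * 1) ≤ 1) :
    ∃ v : ℝ, v ∈ Set.Ioc (0:ℝ) 1 ∧
      ∑ i ∈ D, (i:ℝ) * q i / (δ i + (i:ℝ) * v) = 1 := by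
  set f : ℝ → ℝ := fun v => ∑ i ∈ D, (i:ℝ) * q i / (δ i + (i:ℝ) * v) with hf
  have hcont : ContinuousOn f (Set.Icc v₀ 1) := by
    apply continuousOn_finset_sum
    intro i hi
    apply ContinuousOn.div (by fun_prop) (by fun_prop)
    intro v hv
    have h1 := hδ i hi
    have h2 : (0:ℝ) < i := by exact_mod_cast hD i hi
    have : 0 < δ i + (i:ℝ) * v := by nlinarith [hv.1]
    linarith
  have hmem : (1:ℝ) ∈ Set.Icc (f 1) (f v₀) := ⟨hhi, hlo⟩
  obtain ⟨v, hv, hfv⟩ := intermediate_value_Icc' hv₁ hcont hmem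
  exact ⟨v, ⟨lt_of_lt_of_le hv₀ hv.1, hv.2⟩, hfv⟩

-- nonnegativity of terms
lemma term_nonneg {i : ℕ} (hi : 0 < i) {qi δi v : ℝ} (hqi : 0 ≤ qi) (hδi : 0 ≤ δi)
    (hv : 0 < v) : 0 ≤ (i:ℝ) * qi / (δi + (i:ℝ) * v) := by
  have h2 : (0:ℝ) < i := by exact_mod_cast hi
  apply div_nonneg (by positivity)
  nlinarith

-- upper bound at v = 1
lemma sum_at_one_le (D : Finset ℕ) (hD : ∀ k ∈ D, 0 < k)
    (q : ℕ → ℝ) (hq : ∀ k ∈ D, 0 < q k) (hqsum : ∑ k ∈ D, q k = 1)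
    (δ : ℕ → ℝ) (hδ : ∀ k ∈ D, 0 ≤ δ k) :
    ∑ i ∈ D, (i:ℝ) * q i / (δ i + (i:ℝ) * 1) ≤ 1 := by
  calc ∑ i ∈ D, (i:ℝ) * q i / (δ i + (i:ℝ) * 1) ≤ ∑ i ∈ D, q i := by
        apply Finset.sum_le_sum
        intro i hi
        have h2 : (0:ℝ) < i := by exact_mod_cast hD i hi
        have h1 := hδ i hi
        have hq' := (hq i hi).le
        rw [div_le_iff₀ (by nlinarith)]
        nlinarith
    _ = 1 := hqsum


set_option maxHeartbeats 1000000 in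
/-- Suppose each degree class `k` has a probability weighting
function `w_k` with `w_k(1) = 1` whose steepness near `1` is unbounded:
`(1 - w_k(1-s))/s → ∞` as `s → 0⁺`. Then at any degree-based equilibrium of the game
with perceived costs `J^w_k(δ) = w_k(x_k(δ)) + c_k δ_k` on strategy sets `[0, 1/c_k]`,
every degree chooses a strictly positive curing rate, irrespective of the (finite)
per-unit costs `c_k > 0`. -/
theorem dbe_positive_under_probability_weighting
    (D : Finset ℕ) (hD : ∀ k ∈ D, 0 < k)
    (q : ℕ → ℝ) (hq : ∀ k ∈ D, 0 < q k) (hqsum : ∑ k ∈ D, q k = 1)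
    (c : ℕ → ℝ) (hc : ∀ k ∈ D, 0 < c k)
    (w : ℕ → ℝ → ℝ)
    (hw1 : ∀ k ∈ D, w k 1 = 1)
    (hwsteep : ∀ k ∈ D,
      Filter.Tendsto (fun s : ℝ => (1 - w k (1 - s)) / s)
        (nhdsWithin 0 (Set.Ioi 0)) Filter.atTop)
    (δstar : ℕ → ℝ)
    (hfeas : ∀ k ∈ D, δstar k ∈ Set.Icc (0 : ℝ) (1 / c k))
    (hdbe : ∀ k ∈ D, ∀ s ∈ Set.Icc (0 : ℝ) (1 / c k),
      w k (xinf D q δstar k) + c k * δstar k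
        ≤ w k (xinf D q (Function.update δstar k s) k) + c k * s) :
    ∀ k ∈ D, 0 < δstar k := by
  intro k hk
  by_contra hpos
  have hδk0 : δstar k = 0 := le_antisymm (not_lt.mp hpos) (hfeas k hk).1
  have hkR : (0:ℝ) < k := by exact_mod_cast hD k hk
  have hqk : 0 < q k := hq k hk
  have hck : 0 < c k := hc k hk
  have hδnn : ∀ i ∈ D, 0 ≤ δstar i := fun i hi => (hfeas i hi).1
  have hqk1 : q k ≤ 1 := by
    rw [← hqsum]
    exact Finset.single_le_sum (fun i hi => (hq i hi).le) hk
  -- Step 1: v(δ*) > 0 and x_k(δ*) = 1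
  have hex : ∃ v : ℝ, v ∈ Set.Ioc (0:ℝ) 1 ∧
      ∑ i ∈ D, (i:ℝ) * q i / (δstar i + (i:ℝ) * v) = 1 := by
    apply exists_vsol D hD q δstar hδnn (q k) hqk hqk1
    · calc (1:ℝ) = (k:ℝ) * q k / (δstar k + (k:ℝ) * q k) := by
            rw [hδk0]; field_simp; ring
        _ ≤ ∑ i ∈ D, (i:ℝ) * q i / (δstar i + (i:ℝ) * q k) :=
            Finset.single_le_sum (fun i hi =>
              term_nonneg (hD i hi) (hq i hi).le (hδnn i hi) hqk) hk
    · exact sum_at_one_le D hD q hq hqsum δstar hδnn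
  obtain ⟨hv_mem, _⟩ := vstar_spec hex
  have hv_pos : 0 < vstar D q δstar := hv_mem.1
  have hx1 : xinf D q δstar k = 1 := by
    rw [xinf, if_pos hv_pos, hδk0]
    field_simp
    ring
  -- Step 2: extract ε from the steepness assumption
  set M : ℝ := ((k:ℝ) + 1) * (c k + 1) with hM
  have hMpos : 0 < M := by positivity
  have hev : ∀ᶠ r in nhdsWithin 0 (Set.Ioi 0),
      M ≤ (1 - w k (1 - r)) / r := (hwsteep k hk).eventually_ge_atTop M
  rw [eventually_nhdsWithin_iff] at hev
  obtain ⟨ε, hε, hball⟩ := Metric.eventually_nhds_iff.mp hev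
  -- Step 3: choose a small deviation s
  set s : ℝ := min (1 / c k) (min 1 (min ((k:ℝ) * q k / 2) (ε * (k:ℝ) * q k / 4))) with hs
  have hs_pos : 0 < s := by positivity
  have hs_le_inv : s ≤ 1 / c k := min_le_left _ _
  have hs_le_one : s ≤ 1 := le_trans (min_le_right _ _) (min_le_left _ _)
  have hs_le_kq : s ≤ (k:ℝ) * q k / 2 :=
    le_trans (min_le_right _ _) (le_trans (min_le_right _ _) (min_le_left _ _))
  have hs_le_eps : s ≤ ε * (k:ℝ) * q k / 4 :=
    le_trans (min_le_right _ _) (le_trans (min_le_right _ _) (min_le_right _ _))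
  set δ' : ℕ → ℝ := Function.update δstar k s with hδ'
  have hδ'k : δ' k = s := Function.update_self k s δstar
  have hδ'nn : ∀ i ∈ D, 0 ≤ δ' i := by
    intro i hi
    rcases eq_or_ne i k with rfl | hne
    · rw [hδ'k]; exact hs_pos.le
    · rw [hδ', Function.update_of_ne hne]; exact hδnn i hi
  -- Step 4: existence of v' for the deviated profile
  have hex' : ∃ v : ℝ, v ∈ Set.Ioc (0:ℝ) 1 ∧
      ∑ i ∈ D, (i:ℝ) * q i / (δ' i + (i:ℝ) * v) = 1 := by
    apply exists_vsol D hD q δ' hδ'nn (q k / 2) (by positivity) (by linarith)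
    · calc (1:ℝ) ≤ (k:ℝ) * q k / (δ' k + (k:ℝ) * (q k / 2)) := by
            rw [hδ'k, le_div_iff₀ (by positivity)]
            nlinarith
        _ ≤ ∑ i ∈ D, (i:ℝ) * q i / (δ' i + (i:ℝ) * (q k / 2)) :=
            Finset.single_le_sum (fun i hi =>
              term_nonneg (hD i hi) (hq i hi).le (hδ'nn i hi) (by positivity)) hk
    · exact sum_at_one_le D hD q hq hqsum δ' hδ'nn
  obtain ⟨hv'_mem, hv'_eq⟩ := vstar_spec hex'
  set v' : ℝ := vstar D q δ' with hv'
  have hv'_pos : 0 < v' := hv'_mem.1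
  have hv'_le1 : v' ≤ 1 := hv'_mem.2
  -- lower bound v' ≥ q k / 2
  have hv'_lb : q k / 2 ≤ v' := by
    have hterm : (k:ℝ) * q k / (δ' k + (k:ℝ) * v') ≤ 1 := by
      rw [← hv'_eq]
      exact Finset.single_le_sum (fun i hi =>
        term_nonneg (hD i hi) (hq i hi).le (hδ'nn i hi) hv'_pos) hk
    rw [hδ'k, div_le_one (by nlinarith)] at hterm
    nlinarith
  -- Step 5: compute x_k at the deviated profile
  set r : ℝ := s / (s + (k:ℝ) * v') with hr
  have hden : 0 < s + (k:ℝ) * v' := by nlinarith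
  have hr_pos : 0 < r := by positivity
  have hr_lt_eps : r < ε := by
    have h1 : r ≤ s / ((k:ℝ) * (q k / 2)) := by
      apply div_le_div_of_nonneg_left hs_pos.le (by positivity)
      nlinarith
    have h2 : s / ((k:ℝ) * (q k / 2)) ≤ ε / 2 := by
      rw [div_le_iff₀ (by positivity)]
      have heq : ε / 2 * ((k:ℝ) * (q k / 2)) = ε * (k:ℝ) * q k / 4 := by ring
      linarith
    linarith
  have hx' : xinf D q δ' k = 1 - r := by
    rw [xinf, if_pos hv'_pos, hδ'k, ← hv', hr]
    field_simp
    ring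
  -- Step 6: apply steepness
  have hrball : M ≤ (1 - w k (1 - r)) / r := by
    apply hball _ hr_pos
    rw [Real.dist_eq, sub_zero, abs_of_pos hr_pos]
    exact hr_lt_eps
  have hwbound : M * r ≤ 1 - w k (1 - r) := by
    rw [le_div_iff₀ hr_pos] at hrball
    linarith
  -- r ≥ s / (k+1)
  have hr_lb : s / ((k:ℝ) + 1) ≤ r := by
    apply div_le_div_of_nonneg_left hs_pos.le hden
    nlinarith
  have hMr : (c k + 1) * s ≤ M * r := by
    have : M * (s / ((k:ℝ) + 1)) = (c k + 1) * s := by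
      rw [hM]; field_simp
    nlinarith [mul_le_mul_of_nonneg_left hr_lb hMpos.le]
  -- Step 7: contradiction with the equilibrium condition
  have hDBE := hdbe k hk s ⟨hs_pos.le, hs_le_inv⟩
  rw [hx1, hw1 k hk, hδk0, ← hδ', hx'] at hDBE
  have : w k (1 - r) ≤ 1 - (c k + 1) * s := by linarith
  nlinarith
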